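/- arXiv:0709.1971 — 2 statements merged into one kernel-verified Lean document; each statement's English description precedes it below -/
import Mathlib

section
/- Let μ, ν be compositions of n and let O^μ_ν denote the set of cosets c ∈ S_n/S_ν such that every w ∈ c lies in the set of shortest representatives of S_μ\S_n. Then the map sending w ∈ O^μ_ν to ψ_ν(wT^μ) (replace the first ν₁ entries 1,…,ν₁ by 1's, the next ν₂ entries by 2's, etc.) is a bijection from O^μ_ν onto the set of column-strict fillings of D^μ of type ν. -/
/-- The Coxeter length of a permutation of `Fin n`: its number of inversions. -/
def permLength {n : ℕ} (w : Equiv.Perm (Fin n)) : ℕ :=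
  (Finset.univ.filter fun p : Fin n × Fin n => p.1 < p.2 ∧ w p.2 < w p.1).card

/-- The column (block) of position `b` for the composition `μ`. -/
def blockOf {n k : ℕ} (μ : Fin k → ℕ) (b : Fin n) : ℕ :=
  (Finset.univ.filter fun c : Fin k =>
    (∑ c' ∈ Finset.univ.filter (· ≤ c), μ c') ≤ (b : ℕ)).card

/-- Membership in the Young subgroup `S_ν`: `u` preserves each `ν`-block. -/
def InYoung {n k : ℕ} (ν : Fin k → ℕ) (u : Equiv.Perm (Fin n)) : Prop :=
  ∀ b : Fin n, blockOf ν (u b) = blockOf ν b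

/-- `w` is a shortest coset representative in `S_μ\S_n`. -/
def IsMinRep {n k : ℕ} (μ : Fin k → ℕ) (w : Equiv.Perm (Fin n)) : Prop :=
  ∀ u : Equiv.Perm (Fin n), InYoung μ u → permLength w ≤ permLength (u * w)

/-- `w` represents a coset in `O^μ_ν ⊆ S_n/S_ν`: every element of `w S_ν` is a
shortest representative of its coset in `S_μ\S_n`. -/
def InO {n k : ℕ} (μ ν : Fin k → ℕ) (w : Equiv.Perm (Fin n)) : Prop :=
  ∀ u : Equiv.Perm (Fin n), InYoung ν u → IsMinRep μ (w * u)

/-- `ψ_ν(w T^μ)`: the filling of `D^μ` whose entry at box `b` is obtained from the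
entry `w⁻¹ b` of `w T^μ` by collapsing consecutive blocks of values of sizes
`ν 0, ν 1, …`. -/
def Psi {n k : ℕ} (ν : Fin k → ℕ) (w : Equiv.Perm (Fin n)) : Fin n → ℕ :=
  fun b => blockOf ν (w⁻¹ b)

/-- `f` is a column-strict filling of `D^μ` of type `ν`: entries strictly increase
down each column, and the value `c` occurs exactly `ν c` times. -/
def ColStrict {n k : ℕ} (μ ν : Fin k → ℕ) (f : Fin n → ℕ) : Prop :=
  (∀ i j : Fin n, i < j → blockOf μ i = blockOf μ j → f i < f j) ∧
    ∀ c : Fin k, (Finset.univ.filter fun b : Fin n => f b = (c : ℕ)).card = ν c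

open Finset

lemma perm_inv_apply_self' {α : Type*} (f : Equiv.Perm α) (x : α) : f⁻¹ (f x) = x :=
  Equiv.Perm.inv_eq_iff_eq.mpr rfl

lemma perm_apply_inv_self' {α : Type*} (f : Equiv.Perm α) (x : α) : f (f⁻¹ x) = x :=
  (Equiv.eq_symm_apply f).mp rfl

lemma psum_mono {k : ℕ} (ν : Fin k → ℕ) {c c' : Fin k} (h : c ≤ c') :
    (∑ x ∈ univ.filter (· ≤ c), ν x) ≤ ∑ x ∈ univ.filter (· ≤ c'), ν x := by
  apply Finset.sum_le_sum_of_subset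
  intro x hx
  simp only [mem_filter, mem_univ, true_and] at *
  exact le_trans hx h

lemma blockOf_lt_iff {n k : ℕ} (ν : Fin k → ℕ) (b : Fin n) (c : Fin k) :
    (c : ℕ) < blockOf ν b ↔ (∑ x ∈ univ.filter (· ≤ c), ν x) ≤ (b : ℕ) := by
  constructor
  · intro h
    by_contra hc
    -- then the filter set is a subset of Iio c
    have hsub : (univ.filter fun c' : Fin k =>
        (∑ x ∈ univ.filter (· ≤ c'), ν x) ≤ (b : ℕ)) ⊆ Finset.Iio c := by
      intro c' hc'
      simp only [mem_filter, mem_univ, true_and] at hc'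
      rw [Finset.mem_Iio]
      by_contra hcc
      push_neg at hcc
      exact hc (le_trans (psum_mono ν hcc) hc')
    have := Finset.card_le_card hsub
    rw [Fin.card_Iio] at this
    exact absurd (lt_of_lt_of_le h this) (lt_irrefl _)
  · intro h
    have hsub : Finset.Iic c ⊆ (univ.filter fun c' : Fin k =>
        (∑ x ∈ univ.filter (· ≤ c'), ν x) ≤ (b : ℕ)) := by
      intro c' hc'
      rw [Finset.mem_Iic] at hc'
      simp only [mem_filter, mem_univ, true_and]
      exact le_trans (psum_mono ν hc') h
    have := Finset.card_le_card hsub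
    rw [Fin.card_Iic] at this
    exact lt_of_lt_of_le (Nat.lt_succ_self _) this

lemma blockOf_le_iff {n k : ℕ} (ν : Fin k → ℕ) (b : Fin n) (c : Fin k) :
    (c : ℕ) ≤ blockOf ν b ↔ (∑ x ∈ univ.filter (· < c), ν x) ≤ (b : ℕ) := by
  constructor
  · intro h
    rcases Nat.eq_zero_or_pos (c : ℕ) with h0 | h0
    · have : univ.filter (· < c) = (∅ : Finset (Fin k)) := by
        ext x; simp only [mem_filter, mem_univ, true_and, Finset.notMem_empty, iff_false]
        intro hx
        exact absurd (Fin.lt_iff_val_lt_val.mp hx) (by omega)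
      rw [this]; simp
    · set c' : Fin k := ⟨(c : ℕ) - 1, lt_trans (by omega) c.isLt⟩ with hc'
      have h1 : (c' : ℕ) < blockOf ν b := by
        have : (c' : ℕ) < (c : ℕ) := by simp [hc']; omega
        omega
      rw [blockOf_lt_iff] at h1
      have : (univ.filter (· < c)) = (univ.filter (· ≤ c')) := by
        ext x
        simp only [mem_filter, mem_univ, true_and, Fin.lt_iff_val_lt_val, Fin.le_iff_val_le_val]
        show (x:ℕ) < c ↔ (x:ℕ) ≤ (c:ℕ) - 1
        omega
      rw [this]; exact h1
  · intro h
    have hsub : Finset.Iio c ⊆ (univ.filter fun c' : Fin k =>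
        (∑ x ∈ univ.filter (· ≤ c'), ν x) ≤ (b : ℕ)) := by
      intro c' hc'
      rw [Finset.mem_Iio] at hc'
      simp only [mem_filter, mem_univ, true_and]
      refine le_trans ?_ h
      apply Finset.sum_le_sum_of_subset
      intro x hx
      simp only [mem_filter, mem_univ, true_and] at *
      exact lt_of_le_of_lt hx hc'
    have := Finset.card_le_card hsub
    rw [Fin.card_Iio] at this
    exact this


lemma blockOf_mono {n k : ℕ} (ν : Fin k → ℕ) {b b' : Fin n} (h : b ≤ b') :
    blockOf ν b ≤ blockOf ν b' := by
  apply Finset.card_le_card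
  intro c hc
  simp only [mem_filter, mem_univ, true_and] at *
  exact le_trans hc h

lemma lt_of_blockOf_lt {n k : ℕ} (ν : Fin k → ℕ) {b b' : Fin n}
    (h : blockOf ν b < blockOf ν b') : b < b' := by
  by_contra hc
  push_neg at hc
  exact absurd (blockOf_mono ν hc) (by omega)

lemma blockOf_lt_k {n k : ℕ} (ν : Fin k → ℕ) (hν : ∑ c, ν c = n) (b : Fin n) :
    blockOf ν b < k := by
  have hk : 0 < k := by
    rcases Nat.eq_zero_or_pos k with h0 | h0
    · subst h0
      simp at hν
      exact absurd b.isLt (by omega)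
    · exact h0
  set c : Fin k := ⟨k - 1, by omega⟩ with hc
  have hfull : univ.filter (· ≤ c) = (univ : Finset (Fin k)) := by
    ext x
    simp only [mem_filter, mem_univ, true_and, iff_true, Fin.le_iff_val_le_val]
    show (x : ℕ) ≤ k - 1
    have := x.isLt; omega
  have : ¬ ((c : ℕ) < blockOf ν b) := by
    rw [blockOf_lt_iff, hfull, hν]
    exact fun h => absurd b.isLt (by omega)
  have hcard : blockOf ν b ≤ k := le_trans (Finset.card_le_card (Finset.filter_subset _ _))
      (by simp)
  simp only [hc] at this
  omega

lemma psum_split {k : ℕ} (ν : Fin k → ℕ) (c : Fin k) :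
    (∑ x ∈ univ.filter (· ≤ c), ν x) = (∑ x ∈ univ.filter (· < c), ν x) + ν c := by
  have : univ.filter (· ≤ c) = insert c (univ.filter (· < c)) := by
    ext x
    simp only [mem_filter, mem_univ, true_and, Finset.mem_insert]
    constructor
    · intro h; rcases eq_or_lt_of_le h with h | h
      · exact Or.inl h
      · exact Or.inr h
    · rintro (rfl | h); · exact le_refl _
      · exact le_of_lt h
  rw [this, Finset.sum_insert (by simp), add_comm]

lemma psum_le_n {n k : ℕ} (ν : Fin k → ℕ) (hν : ∑ c, ν c = n) (c : Fin k) :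
    (∑ x ∈ univ.filter (· ≤ c), ν x) ≤ n := by
  rw [← hν]
  exact Finset.sum_le_sum_of_subset (Finset.filter_subset _ _)

lemma fiber_card {n k : ℕ} (ν : Fin k → ℕ) (hν : ∑ c, ν c = n) (c : Fin k) :
    (univ.filter fun b : Fin n => blockOf ν b = (c : ℕ)).card = ν c := by
  set s := ∑ x ∈ univ.filter (· < c), ν x with hs
  set t := ∑ x ∈ univ.filter (· ≤ c), ν x with ht
  have hts : t = s + ν c := psum_split ν c
  have htn : t ≤ n := psum_le_n ν hν c
  have hiff : ∀ b : Fin n, blockOf ν b = (c : ℕ) ↔ (s ≤ (b:ℕ) ∧ (b:ℕ) < t) := by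
    intro b
    constructor
    · intro h
      constructor
      · exact (blockOf_le_iff ν b c).mp (le_of_eq h.symm)
      · by_contra hc
        push_neg at hc
        have := (blockOf_lt_iff ν b c).mpr hc
        omega
    · rintro ⟨h1, h2⟩
      have ha := (blockOf_le_iff ν b c).mpr h1
      have hb : ¬ ((c:ℕ) < blockOf ν b) := fun h => by
        have := (blockOf_lt_iff ν b c).mp h; omega
      omega
  have : (univ.filter fun b : Fin n => blockOf ν b = (c : ℕ)) =
      (univ.filter fun b : Fin n => s ≤ (b:ℕ) ∧ (b:ℕ) < t) := by
    ext b; simp only [mem_filter, mem_univ, true_and]; exact hiff b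
  rw [this]
  have : ((univ.filter fun b : Fin n => s ≤ (b:ℕ) ∧ (b:ℕ) < t).card) = (Finset.Ico s t).card := by
    apply Finset.card_bij (fun (b : Fin n) (_ : b ∈ univ.filter fun b : Fin n => s ≤ (b:ℕ) ∧ (b:ℕ) < t) => (b : ℕ))
    · intro b hb; simp only [mem_filter] at hb; rw [Finset.mem_Ico]; exact hb.2
    · intro b1 h1 b2 h2 h; exact Fin.val_injective h
    · intro m hm
      rw [Finset.mem_Ico] at hm
      exact ⟨⟨m, by omega⟩, by simp [hm.1, hm.2], rfl⟩
  rw [this, Nat.card_Ico]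
  omega

lemma InYoung.inv {n k : ℕ} {ν : Fin k → ℕ} {u : Equiv.Perm (Fin n)}
    (h : InYoung ν u) : InYoung ν u⁻¹ := by
  intro b
  have := h (u⁻¹ b)
  rw [perm_apply_inv_self'] at this
  exact this.symm

lemma InYoung.swap {n k : ℕ} {ν : Fin k → ℕ} {x y : Fin n}
    (h : blockOf ν x = blockOf ν y) : InYoung ν (Equiv.swap x y) := by
  intro b
  rcases eq_or_ne b x with rfl | hbx
  · rw [Equiv.swap_apply_left, h]
  rcases eq_or_ne b y with rfl | hby
  · rw [Equiv.swap_apply_right, h]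
  · rw [Equiv.swap_apply_of_ne_of_ne hbx hby]

-- an adjacent-value swap preserves the order of any pair other than {a,b}
lemma swap_adj_order {n : ℕ} {a b x y : Fin n} (hab : (b : ℕ) = (a : ℕ) + 1)
    (hxy : x < y) (h1 : ¬ (x = a ∧ y = b)) :
    Equiv.swap a b x < Equiv.swap a b y := by
  have hab' : a < b := by rw [Fin.lt_iff_val_lt_val]; omega
  rcases eq_or_ne x a with hxa | hxa
  · have hyb : y ≠ b := fun h => h1 ⟨hxa, h⟩
    have hy : b < y := by
      rw [hxa] at hxy
      rw [Fin.lt_iff_val_lt_val] at hxy ⊢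
      have := Fin.val_ne_of_ne hyb; omega
    rw [hxa, Equiv.swap_apply_left,
      Equiv.swap_apply_of_ne_of_ne (ne_of_gt (lt_trans hab' hy)) (ne_of_gt hy)]
    exact hy
  rcases eq_or_ne x b with hxb | hxb
  · rw [hxb] at hxy
    have hy : b < y := hxy
    rw [hxb, Equiv.swap_apply_right,
      Equiv.swap_apply_of_ne_of_ne (ne_of_gt (lt_trans hab' hy)) (ne_of_gt hy)]
    exact lt_trans hab' hy
  rcases eq_or_ne y a with hya | hya
  · rw [hya] at hxy
    rw [hya, Equiv.swap_apply_left, Equiv.swap_apply_of_ne_of_ne hxa hxb]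
    exact lt_trans hxy hab'
  rcases eq_or_ne y b with hyb | hyb
  · have hx : x < a := by
      rw [hyb] at hxy
      rw [Fin.lt_iff_val_lt_val] at hxy ⊢
      have := Fin.val_ne_of_ne hxa; omega
    rw [hyb, Equiv.swap_apply_right, Equiv.swap_apply_of_ne_of_ne hxa hxb]
    exact hx
  · rw [Equiv.swap_apply_of_ne_of_ne hxa hxb, Equiv.swap_apply_of_ne_of_ne hya hyb]
    exact hxy

-- the "inversion set" inclusion: if w⁻¹ is increasing on μ-blocks, then
-- w has minimal length in its coset S_μ w
lemma isMinRep_of_incr {n k : ℕ} {μ : Fin k → ℕ} {w : Equiv.Perm (Fin n)}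
    (h : ∀ a b : Fin n, a < b → blockOf μ a = blockOf μ b → w⁻¹ a < w⁻¹ b) :
    IsMinRep μ w := by
  intro u hu
  apply Finset.card_le_card
  intro p hp
  simp only [mem_filter, mem_univ, true_and] at hp ⊢
  obtain ⟨hij, hinv⟩ := hp
  refine ⟨hij, ?_⟩
  have hblock : blockOf μ (w p.2) < blockOf μ (w p.1) := by
    rcases lt_or_eq_of_le (blockOf_mono μ (le_of_lt hinv)) with h' | h'
    · exact h'
    · exfalso
      have := h (w p.2) (w p.1) hinv h'
      rw [perm_inv_apply_self', perm_inv_apply_self'] at this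
      exact absurd hij (lt_asymm this)
  apply lt_of_blockOf_lt μ
  show blockOf μ ((u * w) p.2) < blockOf μ ((u * w) p.1)
  rw [Equiv.Perm.mul_apply, Equiv.Perm.mul_apply, hu (w p.2), hu (w p.1)]
  exact hblock

-- swapping two adjacent values that are "inverted" decreases length
lemma length_swap_lt {n : ℕ} {w : Equiv.Perm (Fin n)} {a b : Fin n}
    (hab : (b : ℕ) = (a : ℕ) + 1) (hinv : w⁻¹ b < w⁻¹ a) :
    permLength (Equiv.swap a b * w) < permLength w := by
  set i0 := w⁻¹ b with hi0
  set j0 := w⁻¹ a with hj0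
  have hww : ∀ p : Fin n × Fin n, p.1 < p.2 →
      ((Equiv.swap a b * w) p.2 < (Equiv.swap a b * w) p.1 ↔
        (w p.2 < w p.1 ∧ p ≠ (i0, j0))) := by
    intro p hp
    rcases eq_or_ne p (i0, j0) with rfl | hne
    · simp only [ne_eq, not_true_eq_false, and_false, iff_false, not_lt]
      show (Equiv.swap a b) (w i0) ≤ (Equiv.swap a b) (w j0)
      rw [hi0, hj0, perm_apply_inv_self', perm_apply_inv_self',
        Equiv.swap_apply_left, Equiv.swap_apply_right]
      exact le_of_lt (Fin.lt_iff_val_lt_val.mpr (by omega))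
    · have hpair : ¬ (w p.1 = b ∧ w p.2 = a) := by
        rintro ⟨h1, h2⟩
        apply hne
        have e1 : p.1 = i0 := by rw [hi0, ← h1, perm_inv_apply_self']
        have e2 : p.2 = j0 := by rw [hj0, ← h2, perm_inv_apply_self']
        exact Prod.ext e1 e2
      constructor
      · intro h
        by_contra hc
        push_neg at hc
        rcases Classical.em (w p.2 < w p.1) with h2 | h2
        · exact hne (hc h2)
        · push_neg at h2
          rcases lt_or_eq_of_le h2 with h3 | h3
          · -- w p.1 < w p.2; pair (w p.1, w p.2) ≠ (a,b)?
            have : ¬ (w p.1 = a ∧ w p.2 = b) := by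
              rintro ⟨h4, h5⟩
              -- then p.1 = j0, p.2 = i0, but i0 < j0 and p.1 < p.2
              have e1 : p.1 = j0 := by rw [hj0, ← h4, perm_inv_apply_self']
              have e2 : p.2 = i0 := by rw [hi0, ← h5, perm_inv_apply_self']
              rw [e1, e2] at hp
              exact absurd hinv (lt_asymm hp)
            have := swap_adj_order hab h3 this
            exact absurd h (lt_asymm this)
          · exact absurd (w.injective h3) (by intro h4; rw [h4] at hp; exact lt_irrefl _ hp)
      · rintro ⟨h2, -⟩
        exact swap_adj_order hab h2 (fun hc => hpair ⟨hc.2, hc.1⟩)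
  have hsub : (Finset.univ.filter fun p : Fin n × Fin n =>
        p.1 < p.2 ∧ (Equiv.swap a b * w) p.2 < (Equiv.swap a b * w) p.1) =
      (Finset.univ.filter fun p : Fin n × Fin n =>
        p.1 < p.2 ∧ w p.2 < w p.1).erase (i0, j0) := by
    ext p
    simp only [Finset.mem_erase, mem_filter, mem_univ, true_and, ne_eq]
    constructor
    · rintro ⟨h1, h2⟩
      have := (hww p h1).mp h2
      exact ⟨this.2, h1, this.1⟩
    · rintro ⟨h1, h2, h3⟩
      exact ⟨h2, (hww p h2).mpr ⟨h3, h1⟩⟩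
  show (Finset.univ.filter fun p : Fin n × Fin n =>
      p.1 < p.2 ∧ (Equiv.swap a b * w) p.2 < (Equiv.swap a b * w) p.1).card < _
  rw [hsub]
  apply Finset.card_erase_lt_of_mem
  simp only [mem_filter, mem_univ, true_and]
  refine ⟨hinv, ?_⟩
  show w j0 < w i0
  rw [hj0, hi0, perm_apply_inv_self', perm_apply_inv_self']
  exact Fin.lt_iff_val_lt_val.mpr (by omega)

lemma isMinRep_iff {n k : ℕ} (μ : Fin k → ℕ) (w : Equiv.Perm (Fin n)) :
    IsMinRep μ w ↔ ∀ a b : Fin n, a < b → blockOf μ a = blockOf μ b → w⁻¹ a < w⁻¹ b := by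
  constructor
  · intro hmin
    by_contra hc
    push_neg at hc
    -- there is a "bad pair"; pick one of minimal gap
    set S := (Finset.univ.filter fun p : Fin n × Fin n =>
      p.1 < p.2 ∧ blockOf μ p.1 = blockOf μ p.2 ∧ w⁻¹ p.2 < w⁻¹ p.1) with hS
    have hSne : S.Nonempty := by
      obtain ⟨a, b, h1, h2, h3⟩ := hc
      refine ⟨(a, b), ?_⟩
      simp only [hS, mem_filter, mem_univ, true_and]
      refine ⟨h1, h2, ?_⟩
      rcases lt_or_eq_of_le h3 with h | h
      · exact h
      · exact absurd (w⁻¹.injective h) (by intro h4; rw [h4] at h1; exact lt_irrefl _ h1)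
    obtain ⟨p, hpS, hpmin⟩ := S.exists_min_image (fun p => (p.2 : ℕ) - (p.1 : ℕ)) hSne
    simp only [hS, mem_filter, mem_univ, true_and] at hpS
    obtain ⟨hp1, hp2, hp3⟩ := hpS
    have hadj : (p.2 : ℕ) = (p.1 : ℕ) + 1 := by
      by_contra hna
      have h12 : (p.1 : ℕ) + 1 < (p.2 : ℕ) := by
        have := Fin.lt_iff_val_lt_val.mp hp1; omega
      set c : Fin n := ⟨(p.1 : ℕ) + 1, lt_trans h12 p.2.isLt⟩ with hcdef
      have hc1 : p.1 < c := Fin.lt_iff_val_lt_val.mpr (by simp [hcdef])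
      have hc2 : c < p.2 := Fin.lt_iff_val_lt_val.mpr (by simp [hcdef]; omega)
      have hbc : blockOf μ c = blockOf μ p.1 := by
        have m1 := blockOf_mono μ (le_of_lt hc1)
        have m2 := blockOf_mono μ (le_of_lt hc2)
        omega
      rcases Classical.em (w⁻¹ c < w⁻¹ p.1) with h | h
      · have hmem : (p.1, c) ∈ S := by
          simp only [hS, mem_filter, mem_univ, true_and]
          exact ⟨hc1, hbc.symm, h⟩
        have := hpmin _ hmem
        simp only at this
        omega
      · push_neg at h
        have h' : w⁻¹ p.2 < w⁻¹ c := lt_of_lt_of_le hp3 h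
        have hmem : (c, p.2) ∈ S := by
          simp only [hS, mem_filter, mem_univ, true_and]
          exact ⟨hc2, by omega, h'⟩
        have := hpmin _ hmem
        simp only at this
        omega
    have hlt := length_swap_lt hadj hp3
    have hy : InYoung μ (Equiv.swap p.1 p.2) := InYoung.swap hp2
    exact absurd (hmin _ hy) (not_le_of_gt hlt)
  · exact isMinRep_of_incr

lemma inO_iff {n k : ℕ} (μ ν : Fin k → ℕ) (w : Equiv.Perm (Fin n)) :
    InO μ ν w ↔ ∀ a b : Fin n, a < b → blockOf μ a = blockOf μ b →
      blockOf ν (w⁻¹ a) < blockOf ν (w⁻¹ b) := by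
  constructor
  · intro h a b hab hblock
    have hne : w⁻¹ a ≠ w⁻¹ b :=
      fun hc => absurd (w⁻¹.injective hc) (by intro h4; rw [h4] at hab; exact lt_irrefl _ hab)
    have h1 : w⁻¹ a < w⁻¹ b := by
      have := (isMinRep_iff μ w).mp (by simpa using h 1 (fun b => rfl)) a b hab hblock
      exact this
    by_contra hc
    push_neg at hc
    rcases lt_or_eq_of_le hc with h2 | h2
    · exact absurd h1 (lt_asymm (lt_of_blockOf_lt ν h2))
    · -- same ν-block: use the swap
      set u := Equiv.swap (w⁻¹ a) (w⁻¹ b) with hu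
      have hy : InYoung ν u := InYoung.swap h2.symm
      have := (isMinRep_iff μ (w * u)).mp (h u hy) a b hab hblock
      rw [mul_inv_rev] at this
      have e1 : (u⁻¹ * w⁻¹) a = w⁻¹ b := by
        rw [Equiv.Perm.mul_apply]
        show u⁻¹ (w⁻¹ a) = w⁻¹ b
        rw [hu, Equiv.swap_inv, Equiv.swap_apply_left]
      have e2 : (u⁻¹ * w⁻¹) b = w⁻¹ a := by
        rw [Equiv.Perm.mul_apply]
        show u⁻¹ (w⁻¹ b) = w⁻¹ a
        rw [hu, Equiv.swap_inv, Equiv.swap_apply_right]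
      rw [e1, e2] at this
      exact absurd h1 (lt_asymm this)
  · intro h u hy
    apply isMinRep_of_incr
    intro a b hab hblock
    rw [mul_inv_rev]
    show u⁻¹ (w⁻¹ a) < u⁻¹ (w⁻¹ b)
    apply lt_of_blockOf_lt ν
    rw [hy.inv (w⁻¹ a), hy.inv (w⁻¹ b)]
    exact h a b hab hblock

/-- the map `w ↦ ψ_ν(w T^μ)` gives a bijection from the set of cosets
`O^μ_ν` onto the set of column-strict fillings of `D^μ` of type `ν`: it takes values
in column-strict fillings, two elements have the same image iff they lie in the same
coset of `S_ν`, and every column-strict filling of type `ν` is in the image. -/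
theorem psi_bijection (n k : ℕ) (μ ν : Fin k → ℕ)
    (hμ : ∑ c, μ c = n) (hν : ∑ c, ν c = n) :
    (∀ w : Equiv.Perm (Fin n), InO μ ν w → ColStrict μ ν (Psi ν w)) ∧
      (∀ w w' : Equiv.Perm (Fin n), InO μ ν w → InO μ ν w' →
        (Psi ν w = Psi ν w' ↔ ∃ u, InYoung ν u ∧ w' = w * u)) ∧
      (∀ f : Fin n → ℕ, ColStrict μ ν f → ∃ w, InO μ ν w ∧ Psi ν w = f) := by
  refine ⟨?_, ?_, ?_⟩
  · -- Part 1
    intro w hw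
    constructor
    · intro i j hij hblock
      exact (inO_iff μ ν w).mp hw i j hij hblock
    · intro c
      rw [← fiber_card ν hν c]
      apply Finset.card_bij (fun (b : Fin n) (_ : b ∈ Finset.univ.filter
        fun b : Fin n => Psi ν w b = (c : ℕ)) => w⁻¹ b)
      · intro b hb
        simp only [mem_filter, mem_univ, true_and] at hb ⊢
        exact hb
      · intro b1 _ b2 _ h
        exact w⁻¹.injective h
      · intro x hx
        simp only [mem_filter, mem_univ, true_and] at hx
        refine ⟨w x, ?_, ?_⟩
        · exact Finset.mem_filter.mpr ⟨Finset.mem_univ _, by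
            simp only [Psi, perm_inv_apply_self']; exact hx⟩
        · rw [perm_inv_apply_self']
  · -- Part 2
    intro w w' _ _
    constructor
    · intro hP
      refine ⟨w⁻¹ * w', ?_, ?_⟩
      · intro b
        have := congrFun hP (w' b)
        simp only [Psi] at this
        rw [perm_inv_apply_self'] at this
        exact this
      · group
    · rintro ⟨u, hu, rfl⟩
      funext b
      simp only [Psi, mul_inv_rev, Equiv.Perm.mul_apply]
      exact (hu.inv (w⁻¹ b)).symm
  · -- Part 3
    intro f hf
    obtain ⟨hcs, hty⟩ := hf
    have hbound : ∀ b : Fin n, f b < k := by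
      set T := Finset.univ.biUnion
        (fun c : Fin k => Finset.univ.filter fun b : Fin n => f b = (c : ℕ)) with hT
      have hcard : T.card = n := by
        rw [hT, Finset.card_biUnion]
        · rw [Finset.sum_congr rfl (fun c _ => hty c)]
          exact hν
        · intro c1 _ c2 _ hne
          rw [Function.onFun, Finset.disjoint_left]
          intro b hb1 hb2
          simp only [mem_filter, mem_univ, true_and] at hb1 hb2
          exact hne (Fin.val_injective (hb1 ▸ hb2 ▸ rfl))
      have hTuniv : T = Finset.univ :=
        Finset.eq_univ_of_card T (by rw [hcard, Fintype.card_fin])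
      intro b
      have hb : b ∈ T := hTuniv ▸ Finset.mem_univ b
      rw [hT] at hb
      simp only [Finset.mem_biUnion, mem_filter, mem_univ, true_and] at hb
      obtain ⟨c, hc⟩ := hb
      rw [hc]
      exact c.isLt
    set f' : Fin n → Fin k := fun b => ⟨f b, hbound b⟩ with hf'
    set B' : Fin n → Fin k := fun x => ⟨blockOf ν x, blockOf_lt_k ν hν x⟩ with hB'
    have hcards : ∀ c : Fin k, Fintype.card {b // f' b = c} = Fintype.card {x // B' x = c} := by
      intro c
      rw [Fintype.card_subtype, Fintype.card_subtype]
      have e1 : (Finset.univ.filter fun b => f' b = c) =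
          (Finset.univ.filter fun b : Fin n => f b = (c : ℕ)) := by
        ext b
        simp only [mem_filter, mem_univ, true_and, hf', Fin.ext_iff]
      have e2 : (Finset.univ.filter fun x => B' x = c) =
          (Finset.univ.filter fun x : Fin n => blockOf ν x = (c : ℕ)) := by
        ext x
        simp only [mem_filter, mem_univ, true_and, hB', Fin.ext_iff]
      rw [e1, e2, hty c, fiber_card ν hν c]
    set e : Fin n ≃ Fin n := (Equiv.sigmaFiberEquiv f').symm.trans
      ((Equiv.sigmaCongrRight (fun c => Fintype.equivOfCardEq (hcards c))).trans
        (Equiv.sigmaFiberEquiv B')) with he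
    have hkey : ∀ b : Fin n, B' (e b) = f' b := by
      intro b
      exact ((Fintype.equivOfCardEq (hcards (f' b))) ⟨b, rfl⟩).2
    set w : Equiv.Perm (Fin n) := e.symm with hw
    have hwinv : ∀ b : Fin n, w⁻¹ b = e b := by
      intro b
      rfl
    have hPsi : Psi ν w = f := by
      funext b
      simp only [Psi, hwinv]
      have := congrArg Fin.val (hkey b)
      exact this
    refine ⟨w, ?_, hPsi⟩
    rw [inO_iff]
    intro a b hab hblock
    rw [hwinv, hwinv]
    have ha := congrArg Fin.val (hkey a)
    have hb := congrArg Fin.val (hkey b)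
    simp only [hB', hf'] at ha hb
    rw [ha, hb]
    exact hcs a b hab hblock
end

section
/- Let x ∈ S_{2k} (k ≥ 2) be the permutation with values (2k, k, k−1, …, 3, 1, 2k−1, 2k−2, …, k+1, 2) at positions 1,…,2k. Then the longest strictly decreasing subsequence of this sequence has length k+1; hence the Robinson–Schensted insertion tableau of x has exactly k+1 rows. -/
/-- Schensted row insertion of `a` into a single row. -/
def bump (a : ℕ) : List ℕ → List ℕ × Option ℕ
  | [] => ([a], none)
  | x :: xs =>
      if a < x then (a :: xs, some x)
      else
        let p := bump a xs
        (x :: p.1, p.2)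

/-- Schensted insertion of `a` into a tableau (list of rows, top row first). -/
def insertTableau : List (List ℕ) → ℕ → List (List ℕ)
  | [], a => [[a]]
  | r :: rs, a =>
      match bump a r with
      | (r', none) => r' :: rs
      | (r', some b) => r' :: insertTableau rs b

/-- The Robinson–Schensted insertion tableau of a word. -/
def RSInsertion (w : List ℕ) : List (List ℕ) := w.foldl insertTableau []

/-- The word `(2k, k, k−1, …, 3, 1, 2k−1, 2k−2, …, k+1, 2)` of length `2k`. -/
def word7 (k : ℕ) : List ℕ :=
  [2 * k] ++ ((List.range (k - 2)).map fun i => k - i) ++ [1] ++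
    ((List.range (k - 1)).map fun i => 2 * k - 1 - i) ++ [2]

section RSAux

def sing (a : ℕ) : List ℕ := [a]
def prow (p : ℕ × ℕ) : List ℕ := [p.1, p.2]

def shiftRows : List (ℕ × ℕ) → ℕ → List (ℕ × ℕ)
  | [], _ => []
  | (a, b) :: t, v => (a, v) :: shiftRows t b

def lastOut : List (ℕ × ℕ) → ℕ → ℕ
  | [], v => v
  | (_, b) :: t, _ => lastOut t b

def Cond : List (ℕ × ℕ) → ℕ → Prop
  | [], _ => True
  | (a, b) :: t, v => a ≤ v ∧ v < b ∧ Cond t b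

lemma shiftRows_length (rs : List (ℕ × ℕ)) (v : ℕ) : (shiftRows rs v).length = rs.length := by
  induction rs generalizing v with
  | nil => rfl
  | cons p t ih => obtain ⟨a, b⟩ := p; simp [shiftRows, ih]

lemma bump_two (a b v : ℕ) (h1 : a ≤ v) (h2 : v < b) :
    bump v [a, b] = ([a, v], some b) := by
  simp [bump, Nat.not_lt.2 h1, h2]

lemma cascade (rs : List (ℕ × ℕ)) (rest : List (List ℕ)) (v : ℕ) (h : Cond rs v) :
    insertTableau (rs.map prow ++ rest) v
      = (shiftRows rs v).map prow ++ insertTableau rest (lastOut rs v) := by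
  induction rs generalizing v with
  | nil => simp [shiftRows, lastOut]
  | cons p t ih =>
      obtain ⟨a, b⟩ := p
      obtain ⟨h1, h2, h3⟩ := h
      simp only [List.map_cons, List.cons_append, insertTableau, prow, bump_two a b v h1 h2,
        shiftRows, lastOut]
      rw [ih b h3]

lemma range_succ_shift (n : ℕ) (f : ℕ → α) :
    (List.range (n+1)).map f = f 0 :: (List.range n).map (fun i => f (i+1)) := by
  rw [List.range_succ_eq_map]
  simp [Function.comp]

lemma cond_range (n : ℕ) : ∀ s t : ℕ, s ≤ t →
    Cond ((List.range n).map fun i => (s + i, t + 1 + i)) t := by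
  induction n with
  | zero => intro s t _; simp [Cond]
  | succ n ih =>
      intro s t h
      rw [range_succ_shift]
      refine ⟨by simpa using h, by omega, ?_⟩
      have : (fun i => (s + (i + 1), t + 1 + (i + 1))) = (fun i => (s + 1 + i, (t + 1) + 1 + i)) := by
        funext i; simp [Prod.ext_iff]; omega
      rw [this]
      simpa using ih (s+1) (t+1) (by omega)

lemma lastOut_range (n : ℕ) : ∀ s t : ℕ,
    lastOut ((List.range n).map fun i => (s + i, t + 1 + i)) t = t + n := by
  induction n with
  | zero => intro s t; simp [lastOut]
  | succ n ih =>
      intro s t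
      rw [range_succ_shift]
      have : (fun i => (s + (i + 1), t + 1 + (i + 1))) = (fun i => (s + 1 + i, (t + 1) + 1 + i)) := by
        funext i; simp [Prod.ext_iff]; omega
      simp only [lastOut, this]
      rw [ih (s+1) (t+1)]; omega

lemma shift_range (n : ℕ) : ∀ s t : ℕ,
    shiftRows ((List.range n).map fun i => (s + i, t + 1 + i)) t
      = (List.range n).map fun i => (s + i, t + i) := by
  induction n with
  | zero => intro s t; simp [shiftRows]
  | succ n ih =>
      intro s t
      rw [range_succ_shift, range_succ_shift]
      have h1 : (fun i => (s + (i + 1), t + 1 + (i + 1))) = (fun i => (s + 1 + i, (t + 1) + 1 + i)) := by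
        funext i; simp [Prod.ext_iff]; omega
      simp only [shiftRows, h1]
      rw [ih (s+1) (t+1)]
      congr 1
      apply List.map_congr_left
      intro i _; simp [Prod.ext_iff]; omega

lemma colInsert (c : List ℕ) : ∀ a : ℕ, List.Chain (· < ·) a c →
    insertTableau (c.map sing) a = (a :: c).map sing := by
  induction c with
  | nil => intro a _; simp [insertTableau, sing]
  | cons b c ih =>
      intro a h
      rw [List.Chain, List.chain_cons] at h
      simp only [List.map_cons, insertTableau, sing, bump, if_pos h.1]
      rw [ih b h.2]
      simp [sing]

lemma colFold (w : List ℕ) : ∀ c : List ℕ, List.Chain' (· < ·) (w.reverse ++ c) →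
    List.foldl insertTableau (c.map sing) w = (w.reverse ++ c).map sing := by
  induction w with
  | nil => intro c _; simp
  | cons a w ih =>
      intro c h
      have hrw : (a :: w).reverse ++ c = w.reverse ++ (a :: c) := by simp
      rw [hrw] at h ⊢
      have hac : List.Chain' (· < ·) (a :: c) :=
        h.suffix ⟨w.reverse, rfl⟩
      rw [List.foldl_cons, colInsert c a hac]
      exact ih (a :: c) h

lemma rev_desc_map (n : ℕ) : ∀ k : ℕ, n ≤ k →
    ((List.range n).map fun i => k - i).reverse = List.range' (k + 1 - n) n := by
  induction n with
  | zero => intro k _; simp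
  | succ n ih =>
      intro k h
      rw [List.range_succ, List.map_append, List.reverse_append]
      simp only [List.map_cons, List.map_nil, List.reverse_cons, List.reverse_nil,
        List.nil_append, List.singleton_append]
      rw [ih k (by omega)]
      have h1 : k + 1 - (n + 1) = k - n := by omega
      have h2 : k + 1 - n = (k - n) + 1 := by omega
      rw [h1, h2, List.range'_succ]

lemma chain_col (m M : ℕ) (h3 : 3 + m ≤ M) :
    List.Chain' (· < ·) (1 :: List.range' 3 m ++ [M]) := by
  apply List.Pairwise.isChain
  rw [List.cons_append, List.pairwise_cons, List.pairwise_append]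
  refine ⟨?_, List.pairwise_lt_range' (s := 3) (n := m), by simp, ?_⟩
  · intro x hx
    rcases List.mem_append.1 hx with h | h
    · have := (List.mem_range'_1.1 h).1; omega
    · simp at h; omega
  · intro x hx y hy
    simp at hy
    have := (List.mem_range'_1.1 hx).2; omega

/-- The tableau after inserting `2k, k, …, 3, 1` and then `2k-1, …, 2k-j`. -/
def Tj (k j : ℕ) : List (List ℕ) :=
  [1, 2*k - j] :: ((List.range (j-1)).map fun i => [3 + i, 2*k - j + 1 + i]) ++
    ((List.range' (j+2) (k-1-j)).map sing) ++ [[2*k]]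

lemma stage1_base (k : ℕ) (hk : 2 ≤ k) :
    insertTableau ((1 :: List.range' 3 (k-2) ++ [2*k]).map sing) (2*k - 1) = Tj k 1 := by
  simp only [List.cons_append, List.map_cons, insertTableau, sing, bump,
    if_neg (by omega : ¬ 2*k - 1 < 1)]
  simp only [Tj, sing]
  have : k - 1 - 1 = k - 2 := by omega
  simp [this, sing]

lemma stage2_step (k j : ℕ) (hj1 : 1 ≤ j) (hj : j ≤ k - 2) (hk : 2 ≤ k) :
    insertTableau (Tj k j) (2*k - 1 - j) = Tj k (j+1) := by
  set rs : List (ℕ × ℕ) :=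
    (1, 2*k - j) :: (List.range (j-1)).map (fun i => (3 + i, (2*k - j) + 1 + i)) with hrs
  set rest : List (List ℕ) :=
    ((List.range' (j+2) (k-1-j)).map sing) ++ [[2*k]] with hrest
  have hT : Tj k j = rs.map prow ++ rest := by
    simp [Tj, hrs, hrest, prow, List.map_map, Function.comp]
  have hcond : Cond rs (2*k - 1 - j) := by
    refine ⟨by omega, by omega, ?_⟩
    exact cond_range (j-1) 3 (2*k - j) (by omega)
  rw [hT, cascade rs rest _ hcond]
  have hlast : lastOut rs (2*k - 1 - j) = 2*k - 1 := by
    simp only [hrs, lastOut]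
    rw [lastOut_range (j-1) 3 (2*k - j)]; omega
  have hshift : shiftRows rs (2*k - 1 - j)
      = (1, 2*k - 1 - j) :: (List.range (j-1)).map (fun i => (3 + i, (2*k - j) + i)) := by
    simp only [hrs, shiftRows]
    rw [shift_range (j-1) 3 (2*k - j)]
  have hrest2 : insertTableau rest (2*k - 1)
      = [j+2, 2*k - 1] :: ((List.range' (j+3) (k-2-j)).map sing) ++ [[2*k]] := by
    have : List.range' (j+2) (k-1-j) = (j+2) :: List.range' (j+3) (k-2-j) := by
      rw [show k-1-j = (k-2-j)+1 by omega, List.range'_succ]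
    rw [hrest, this]
    simp only [List.map_cons, List.cons_append, insertTableau, sing, bump,
      if_neg (by omega : ¬ 2*k - 1 < j + 2)]
  rw [hlast, hshift, hrest2]
  -- now assemble into Tj k (j+1)
  simp only [Tj, List.map_cons, prow, List.map_map, List.cons_append]
  congr 1
  · simp; omega
  rw [show (j+1) - 1 = (j-1) + 1 by omega, List.range_succ, List.map_append,
    show j + 1 + 2 = j + 3 by omega, show k - 1 - (j+1) = k - 2 - j by omega]
  simp only [List.map_cons, List.map_nil, List.append_assoc, List.cons_append, List.nil_append]
  congr 1
  · apply List.map_congr_left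
    intro i hi
    simp only [Function.comp, prow]
    simp only [List.cons.injEq]
    exact ⟨trivial, by omega, trivial⟩
  · simp only [List.cons.injEq]
    exact ⟨⟨by omega, by omega, trivial⟩, trivial⟩

lemma stage2_fold (k : ℕ) (hk : 2 ≤ k) : ∀ j, 1 ≤ j → j ≤ k - 1 →
    List.foldl insertTableau ((1 :: List.range' 3 (k-2) ++ [2*k]).map sing)
      ((List.range j).map fun i => 2*k - 1 - i) = Tj k j := by
  set init := (1 :: List.range' 3 (k-2) ++ [2*k]).map sing with hinit
  intro j
  induction j with
  | zero => omega
  | succ j ih =>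
      intro _ hj
      rw [List.range_succ, List.map_append, List.foldl_append]
      rcases Nat.eq_zero_or_pos j with h0 | h0
      · subst h0
        rw [hinit]
        simpa using stage1_base k hk
      · rw [ih (by omega) (by omega)]
        simpa using stage2_step k j h0 (by omega) hk

lemma final_insert (k : ℕ) (hk : 2 ≤ k) :
    (insertTableau (Tj k (k-1)) 2).length = k + 1 := by
  set rs : List (ℕ × ℕ) :=
    (1, 2*k - (k-1)) :: (List.range (k-1-1)).map (fun i => (3 + i, (2*k - (k-1)) + 1 + i)) with hrs
  have hT : Tj k (k-1) = rs.map prow ++ [[2*k]] := by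
    simp only [Tj, hrs, List.map_cons, List.map_map, prow, show k - 1 - (k-1) = 0 by omega,
      List.range'_zero, List.map_nil, List.nil_append, Function.comp_def]
    simp
  have hcond : Cond rs 2 := by
    refine ⟨by omega, by omega, ?_⟩
    exact cond_range (k-1-1) 3 (2*k - (k-1)) (by omega)
  rw [hT, cascade rs [[2*k]] 2 hcond]
  rw [List.length_append, List.length_map, shiftRows_length]
  have h2 : insertTableau [[2*k]] (lastOut rs 2) = [[lastOut rs 2], [2*k]] := by
    have hlt : lastOut rs 2 < 2*k := by
      simp only [hrs, lastOut]
      rw [lastOut_range (k-1-1) 3 (2*k - (k-1))]; omega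
    simp [insertTableau, bump, if_pos hlt]
  rw [h2]
  simp [hrs]; omega

lemma rs_length (k : ℕ) (hk : 2 ≤ k) : (RSInsertion (word7 k)).length = k + 1 := by
  have hmid : ((List.range (k-2)).map fun i => k - i).reverse = List.range' 3 (k-2) := by
    rw [rev_desc_map (k-2) k (by omega), show k + 1 - (k-2) = 3 by omega]
  have h1 : List.foldl insertTableau []
      ([2*k] ++ ((List.range (k-2)).map fun i => k - i) ++ [1])
      = (1 :: List.range' 3 (k-2) ++ [2*k]).map sing := by
    have hrev : ([2*k] ++ ((List.range (k-2)).map fun i => k - i) ++ [1]).reverse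
        = 1 :: List.range' 3 (k-2) ++ [2*k] := by
      simp [List.reverse_append, hmid]
    have := colFold ([2*k] ++ ((List.range (k-2)).map fun i => k - i) ++ [1]) []
      (by rw [List.append_nil, hrev]; exact chain_col (k-2) (2*k) (by omega))
    rw [hrev] at this
    simpa using this
  rw [RSInsertion, word7]
  rw [List.foldl_append, List.foldl_append, h1,
    stage2_fold k hk (k-1) (by omega) le_rfl]
  simpa using final_insert k hk

lemma part1 (k : ℕ) (hk : 2 ≤ k) :
    ∃ l : List ℕ, l.Sublist (word7 k) ∧ l.Pairwise (· > ·) ∧ l.length = k + 1 := by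
  refine ⟨[2*k] ++ ((List.range (k-1)).map fun i => 2*k - 1 - i) ++ [2], ?_, ?_, ?_⟩
  · have hw : word7 k = [2*k] ++
        ((((List.range (k-2)).map fun i => k - i) ++ [1]) ++
          (((List.range (k-1)).map fun i => 2*k - 1 - i) ++ [2])) := by
      simp [word7]
    rw [hw, List.append_assoc]
    exact (List.Sublist.refl _).append (List.sublist_append_right _ _)
  · simp only [List.append_assoc, List.singleton_append]
    rw [List.cons_append, List.pairwise_cons]
    constructor
    · intro x hx
      rcases List.mem_append.1 hx with h | h
      · obtain ⟨i, hi, rfl⟩ := List.mem_map.1 h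
        have := List.mem_range.1 hi; omega
      · simp at h; omega
    · rw [List.pairwise_append]
      refine ⟨?_, by simp, ?_⟩
      · rw [List.pairwise_map]
        refine (List.pairwise_lt_range (n := k-1)).imp_of_mem ?_
        intro a b ha hb hab
        have := List.mem_range.1 hb
        simp only [gt_iff_lt]; omega
      · intro x hx y hy
        obtain ⟨i, hi, rfl⟩ := List.mem_map.1 hx
        have := List.mem_range.1 hi
        simp at hy; omega
  · simp; omega

lemma part2 (k : ℕ) (hk : 2 ≤ k) (l : List ℕ) (hs : l.Sublist (word7 k))
    (hsort : l.Pairwise (· > ·)) : l.length ≤ k + 1 := by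
  have hw : word7 k = ([2*k] ++ ((List.range (k-2)).map fun i => k - i) ++ [1]) ++
      (((List.range (k-1)).map fun i => 2*k - 1 - i) ++ [2]) := by
    simp [word7]
  rw [hw, List.sublist_append_iff] at hs
  obtain ⟨l1, l2, rfl, h1, h2⟩ := hs
  have hl1 : l1.length ≤ k := by
    have := h1.length_le; simp at this; omega
  have hl2all : ∀ y ∈ l2, k + 1 ≤ y ∨ y = 2 := by
    intro y hy
    have := h2.subset hy
    rcases List.mem_append.1 this with h | h
    · obtain ⟨i, hi, rfl⟩ := List.mem_map.1 h
      have := List.mem_range.1 hi; omega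
    · simp at h; omega
  rw [List.pairwise_append] at hsort
  obtain ⟨p1, p2, cross⟩ := hsort
  match l1, h1, p1 with
  | [], _, _ =>
      have := h2.length_le; simp at this ⊢; omega
  | [a], _, _ =>
      have := h2.length_le; simp at this ⊢; omega
  | a :: b :: t, h1, p1 =>
      -- second element of l1 is ≤ k
      have hA : ∀ x ∈ ([2*k] ++ ((List.range (k-2)).map fun i => k - i) ++ [1]),
          x = 2*k ∨ x ≤ k := by
        intro x hx
        simp only [List.append_assoc, List.mem_append, List.mem_map, List.mem_range,
          List.mem_singleton, List.mem_cons, List.not_mem_nil, or_false] at hx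
        rcases hx with h | ⟨i, hi, rfl⟩ | h <;> omega
      have hbA : b ∈ ([2*k] ++ ((List.range (k-2)).map fun i => k - i) ++ [1]) :=
        h1.subset (by simp)
      have haA : a ∈ ([2*k] ++ ((List.range (k-2)).map fun i => k - i) ++ [1]) :=
        h1.subset (by simp)
      have hab : b < a := by
        rw [List.pairwise_cons] at p1
        exact p1.1 b (by simp)
      have hbk : b ≤ k := by
        rcases hA b hbA with rfl | h
        · rcases hA a haA with rfl | h <;> omega
        · exact h
      -- all of l2 is below b, hence equals 2
      have hl2two : ∀ y ∈ l2, y = 2 := by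
        intro y hy
        have hyb : y < b := cross b (by simp) y hy
        rcases hl2all y hy with h | h <;> omega
      have hl2len : l2.length ≤ 1 := by
        match l2, p2, hl2two with
        | [], _, _ => simp
        | [c], _, _ => simp
        | c :: d :: u, p2, htwo =>
            rw [List.pairwise_cons] at p2
            have := p2.1 d (by simp)
            have hc := htwo c (by simp)
            have hd := htwo d (by simp)
            omega
      have : (a :: b :: t).length ≤ k := hl1
      simp at this ⊢
      omega

end RSAux

/-- the longest strictly decreasing subsequence of the sequence
`(2k, k, k−1, …, 3, 1, 2k−1, 2k−2, …, k+1, 2)` has length exactly `k+1`; hence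
(Schensted) the Robinson–Schensted insertion tableau has exactly `k+1` rows. -/
theorem rs_word7_exactly_k_plus_one_rows (k : ℕ) (hk : 2 ≤ k) :
    (∃ l : List ℕ, l.Sublist (word7 k) ∧ l.Pairwise (· > ·) ∧ l.length = k + 1) ∧
      (∀ l : List ℕ, l.Sublist (word7 k) → l.Pairwise (· > ·) → l.length ≤ k + 1) ∧
      (RSInsertion (word7 k)).length = k + 1 := by
  exact ⟨part1 k hk, fun l hs hsort => part2 k hk l hs hsort, rs_length k hk⟩
end
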